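/- Let A ≅ ℝ^k be an abelian group acting measurably on a standard probability space (X,μ) preserving μ, with a bounded measurable linear cocycle A : A × X → GL(d,ℝ). Fix s' ∈ A. Then there exists a linear functional λ : A → ℝ such that λ(t s') = λ₊(t s', μ) for all t ≥ 0, and λ₊(s,μ) ≥ λ(s) for all s ∈ A, where λ₊(s,μ) is the average top Lyapunov exponent of s. -/

import Mathlib

open MeasureTheory Filter Topology Set

section Aux
variable {E : Type*} [NormedAddCommGroup E] [NormedSpace ℝ E]

noncomputable def auxP (g : E → ℝ) (s : E) : ℝ :=
  ⨅ n : ℕ, (1 / (n + 1 : ℝ)) * g (((n : ℝ) + 1) • s)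

variable {g : E → ℝ} (hadd : ∀ a b, g (a + b) ≤ g a + g b) (h0 : g 0 = 0)

include hadd h0

lemma aux_subadd (s : E) : Subadditive fun n : ℕ => g ((n : ℝ) • s) := by
  intro m n
  have h : ((m + n : ℕ) : ℝ) • s = (m : ℝ) • s + (n : ℝ) • s := by
    push_cast; rw [add_smul]
  show g (((m + n : ℕ) : ℝ) • s) ≤ g ((m : ℝ) • s) + g ((n : ℝ) • s)
  rw [h]; exact hadd _ _

lemma aux_le_nsmul (s : E) (n : ℕ) : g ((n : ℝ) • s) ≤ n * g s := by
  induction n with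
  | zero => simp [h0]
  | succ n ih =>
    have h : ((n + 1 : ℕ) : ℝ) • s = (n : ℝ) • s + s := by
      push_cast; rw [add_smul, one_smul]
    rw [h]
    calc g ((n : ℝ) • s + s) ≤ g ((n : ℝ) • s) + g s := hadd _ _
      _ ≤ n * g s + g s := by linarith
      _ = ((n + 1 : ℕ) : ℝ) * g s := by push_cast; ring

lemma aux_bddBelow (s : E) : BddBelow (range fun n : ℕ => g ((n : ℝ) • s) / n) := by
  refine ⟨min (-g (-s)) 0, ?_⟩
  rintro x ⟨n, rfl⟩
  match n with
  | 0 => simpa [h0] using min_le_right _ _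
  | (n+1) =>
    have hn : (0 : ℝ) < ((n + 1 : ℕ) : ℝ) := by positivity
    have h1 := hadd (((n + 1 : ℕ) : ℝ) • s) (((n + 1 : ℕ) : ℝ) • (-s))
    rw [smul_neg, add_neg_cancel, h0] at h1
    have h2 := aux_le_nsmul hadd h0 (-s) (n + 1)
    rw [smul_neg] at h2
    have h3 : -g (-s) ≤ g (((n + 1 : ℕ) : ℝ) • s) / ((n + 1 : ℕ) : ℝ) := by
      rw [le_div_iff₀ hn]; nlinarith
    exact le_trans (min_le_left _ _) h3

lemma aux_auxP_eq_lim (s : E) : auxP g s = (aux_subadd hadd h0 s).lim := by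
  rw [auxP, Subadditive.lim, iInf]
  congr 1
  ext x
  simp only [mem_range, mem_image, mem_Ici]
  constructor
  · rintro ⟨n, rfl⟩
    refine ⟨n + 1, by omega, ?_⟩
    show g (((n + 1 : ℕ) : ℝ) • s) / ((n + 1 : ℕ) : ℝ) = _
    push_cast
    ring
  · rintro ⟨n, hn, rfl⟩
    obtain ⟨m, rfl⟩ : ∃ m, n = m + 1 := ⟨n - 1, by omega⟩
    refine ⟨m, ?_⟩
    show _ = g (((m + 1 : ℕ) : ℝ) • s) / ((m + 1 : ℕ) : ℝ)
    push_cast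
    ring

lemma aux_tendsto (s : E) :
    Tendsto (fun n : ℕ => g ((n : ℝ) • s) / n) atTop (𝓝 (auxP g s)) := by
  rw [aux_auxP_eq_lim hadd h0 s]
  exact (aux_subadd hadd h0 s).tendsto_lim (aux_bddBelow hadd h0 s)

lemma auxP_zero : auxP g 0 = 0 := by
  simp [auxP, h0]

lemma auxP_add (a b : E) : auxP g (a + b) ≤ auxP g a + auxP g b := by
  refine le_of_tendsto_of_tendsto' (aux_tendsto hadd h0 (a + b))
    ((aux_tendsto hadd h0 a).add (aux_tendsto hadd h0 b)) fun n => ?_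
  match n with
  | 0 => simp [h0]
  | (n+1) =>
    show g (((n + 1 : ℕ) : ℝ) • (a + b)) / ((n + 1 : ℕ) : ℝ) ≤
      g (((n + 1 : ℕ) : ℝ) • a) / ((n + 1 : ℕ) : ℝ) +
        g (((n + 1 : ℕ) : ℝ) • b) / ((n + 1 : ℕ) : ℝ)
    rw [smul_add, ← add_div]
    have hn : (0 : ℝ) ≤ ((n + 1 : ℕ) : ℝ) := by positivity
    exact div_le_div_of_nonneg_right (hadd _ _) hn

lemma auxP_smul (hbd : ∀ s : E, ∃ M : ℝ, ∀ r : ℝ, |r| ≤ 1 → |g (r • s)| ≤ M)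
    (s : E) {c : ℝ} (hc : 0 < c) : auxP g (c • s) = c * auxP g s := by
  obtain ⟨M, hM⟩ := hbd s
  set m : ℕ → ℕ := fun n => ⌊(n : ℝ) * c⌋₊ with hm
  have hmle : ∀ n : ℕ, (m n : ℝ) ≤ (n : ℝ) * c := fun n => Nat.floor_le (by positivity)
  have hmgt : ∀ n : ℕ, (n : ℝ) * c - 1 < m n := fun n => Nat.sub_one_lt_floor _
  have hdiff : ∀ n : ℕ, |g (((n : ℝ) * c) • s) - g ((m n : ℝ) • s)| ≤ M := by
    intro n
    set r : ℝ := (n : ℝ) * c - m n with hr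
    have hr0 : 0 ≤ r := by have := hmle n; simp only [hr]; linarith
    have hr1 : r ≤ 1 := by have := hmgt n; simp only [hr]; linarith
    have hMr := hM r (by rwa [abs_of_nonneg hr0])
    have hMr' := hM (-r) (by rwa [abs_neg, abs_of_nonneg hr0])
    have e1 : ((n : ℝ) * c) • s = (m n : ℝ) • s + r • s := by
      rw [← add_smul]; congr 1; simp [hr]
    have e2 : (m n : ℝ) • s = ((n : ℝ) * c) • s + (-r) • s := by
      rw [← add_smul]; congr 1; simp [hr]
    have b1 : g (((n : ℝ) * c) • s) ≤ g ((m n : ℝ) • s) + M := by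
      rw [e1]
      have := hadd ((m n : ℝ) • s) (r • s)
      have := abs_le.1 hMr
      linarith [this.2]
    have b2 : g ((m n : ℝ) • s) ≤ g (((n : ℝ) * c) • s) + M := by
      conv_lhs => rw [e2]
      have := hadd (((n : ℝ) * c) • s) ((-r) • s)
      have h2 := abs_le.1 hMr'
      linarith [h2.2]
    rw [abs_le]; constructor <;> linarith
  have htop : Tendsto m atTop atTop :=
    tendsto_nat_floor_atTop.comp (tendsto_natCast_atTop_atTop.atTop_mul_const hc)
  have h1 : Tendsto (fun n : ℕ => g ((m n : ℝ) • s) / (m n : ℝ)) atTop (𝓝 (auxP g s)) :=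
    (aux_tendsto hadd h0 s).comp htop
  have h2 : Tendsto (fun n : ℕ => (m n : ℝ) / n) atTop (𝓝 c) := by
    have hlo : Tendsto (fun n : ℕ => c - 1 / (n : ℝ)) atTop (𝓝 c) := by
      have h' : Tendsto (fun n : ℕ => c - 1 / (n : ℝ)) atTop (𝓝 (c - 0)) :=
        Tendsto.sub tendsto_const_nhds tendsto_one_div_atTop_nhds_zero_nat
      simpa using h'
    refine tendsto_of_tendsto_of_tendsto_of_le_of_le' hlo tendsto_const_nhds ?_ ?_
    · filter_upwards [eventually_ge_atTop 1] with n hn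
      have hn' : (0 : ℝ) < (n : ℝ) := by
        have : 1 ≤ n := hn
        positivity
      have h' : ((n : ℝ) * c - 1) / n ≤ (m n : ℝ) / n :=
        div_le_div_of_nonneg_right (le_of_lt (hmgt n)) hn'.le
      calc c - 1 / (n : ℝ) = ((n : ℝ) * c - 1) / n := by field_simp
        _ ≤ (m n : ℝ) / n := h'
    · filter_upwards [eventually_ge_atTop 1] with n hn
      have hn' : (0 : ℝ) < (n : ℝ) := by
        have : 1 ≤ n := hn
        positivity
      rw [div_le_iff₀ hn']
      calc (m n : ℝ) ≤ (n : ℝ) * c := hmle n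
        _ = c * n := mul_comm _ _
  have h3 : Tendsto (fun n : ℕ => g ((m n : ℝ) • s) / n) atTop (𝓝 (auxP g s * c)) := by
    refine ((h1.mul h2)).congr' ?_
    filter_upwards [htop.eventually_ge_atTop 1] with n hmn
    have hm0 : (m n : ℝ) ≠ 0 := Nat.cast_ne_zero.2 (by omega)
    rw [div_mul_div_comm, mul_comm (g ((m n : ℝ) • s)) (m n : ℝ),
      mul_div_mul_left _ _ hm0]
  have h4 : Tendsto (fun n : ℕ => (g (((n : ℝ) * c) • s) - g ((m n : ℝ) • s)) / n)
      atTop (𝓝 0) := by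
    refine squeeze_zero_norm (fun n => ?_) (tendsto_const_div_atTop_nhds_zero_nat M)
    rw [Real.norm_eq_abs, abs_div, Nat.abs_cast]
    match n with
    | 0 => simp
    | (n+1) =>
      exact div_le_div_of_nonneg_right (hdiff (n+1)) (by positivity)

  have h5 := h3.add h4
  rw [add_zero] at h5
  have h6 : Tendsto (fun n : ℕ => g ((n : ℝ) • (c • s)) / n) atTop (𝓝 (auxP g s * c)) := by
    refine h5.congr fun n => ?_
    rw [smul_smul, ← add_div]
    ring_nf
  have := tendsto_nhds_unique (aux_tendsto hadd h0 (c • s)) h6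
  rw [this, mul_comm]

end Aux
/-- Higher-rank Lyapunov exponent functional: for a measure-preserving action of
`A ≅ ℝ^k` on a standard probability space with a bounded measurable linear cocycle `𝒜`
and a fixed `s' ∈ A`, there is a linear functional `λ : A → ℝ` with
`λ(t s') = λ₊(t s', μ)` for all `t ≥ 0` and `λ₊(s, μ) ≥ λ(s)` for all `s ∈ A`, where
`λ₊(s,μ) = inf_n (1/n) ∫ log‖𝒜(n·s, x)‖ dμ` is the average top Lyapunov exponent. -/
theorem stmt18 {X : Type*} [MeasurableSpace X] [StandardBorelSpace X]
    (k d : ℕ)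
    (T : (Fin k → ℝ) → X → X)
    (hT0 : T 0 = id) (hTadd : ∀ a b : Fin k → ℝ, T (a + b) = T a ∘ T b)
    (hTjm : Measurable fun q : (Fin k → ℝ) × X => T q.1 q.2)
    (μ : Measure X) [IsProbabilityMeasure μ]
    (hTpres : ∀ a : Fin k → ℝ, MeasurePreserving (T a) μ μ)
    (𝒜 : (Fin k → ℝ) → X → ((Fin d → ℝ) ≃L[ℝ] (Fin d → ℝ)))
    (h𝒜m : Measurable fun q : (Fin k → ℝ) × X =>
      (𝒜 q.1 q.2 : (Fin d → ℝ) →L[ℝ] (Fin d → ℝ)))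
    (hcoc : ∀ (a b : Fin k → ℝ) (x : X),
      (𝒜 (a + b) x : (Fin d → ℝ) →L[ℝ] (Fin d → ℝ)) =
        ((𝒜 a (T b x) : (Fin d → ℝ) →L[ℝ] (Fin d → ℝ))).comp
          (𝒜 b x : (Fin d → ℝ) →L[ℝ] (Fin d → ℝ)))
    (hbdd : ∀ R : ℝ, ∃ C : ℝ, ∀ a : Fin k → ℝ, ‖a‖ ≤ R → ∀ x : X,
      ‖(𝒜 a x : (Fin d → ℝ) →L[ℝ] (Fin d → ℝ))‖ ≤ C ∧
      ‖((𝒜 a x).symm : (Fin d → ℝ) →L[ℝ] (Fin d → ℝ))‖ ≤ C)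
    (s' : Fin k → ℝ) :
    ∃ lam : (Fin k → ℝ) →ₗ[ℝ] ℝ,
      (∀ t : ℝ, 0 ≤ t →
        lam (t • s') =
          ⨅ n : ℕ, (1 / (n + 1 : ℝ)) *
            ∫ x, Real.log
              ‖(𝒜 (((n : ℝ) + 1) • (t • s')) x : (Fin d → ℝ) →L[ℝ] (Fin d → ℝ))‖ ∂μ) ∧
      ∀ s : Fin k → ℝ,
        lam s ≤
          ⨅ n : ℕ, (1 / (n + 1 : ℝ)) *
            ∫ x, Real.log
              ‖(𝒜 (((n : ℝ) + 1) • s) x : (Fin d → ℝ) →L[ℝ] (Fin d → ℝ))‖ ∂μ := by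
  rcases Nat.eq_zero_or_pos d with rfl | hd
  · -- degenerate case `d = 0`
    have hz : ∀ (a : Fin k → ℝ) (x : X),
        ‖(𝒜 a x : (Fin 0 → ℝ) →L[ℝ] (Fin 0 → ℝ))‖ = 0 := by
      intro a x
      rw [Subsingleton.elim ((𝒜 a x : (Fin 0 → ℝ) →L[ℝ] (Fin 0 → ℝ)))
        (0 : (Fin 0 → ℝ) →L[ℝ] (Fin 0 → ℝ)), norm_zero]
    refine ⟨0, ?_, ?_⟩
    · intro t _
      simp [hz, Real.log_zero, ciInf_const]
    · intro s
      simp [hz, Real.log_zero, ciInf_const]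
  · -- main case `d ≥ 1`
    haveI : Nontrivial (Fin d → ℝ) :=
      ⟨⟨0, fun _ => 1, fun h => zero_ne_one (congrFun h ⟨0, hd⟩)⟩⟩
    set g : (Fin k → ℝ) → ℝ :=
      fun a => ∫ x, Real.log ‖(𝒜 a x : (Fin d → ℝ) →L[ℝ] (Fin d → ℝ))‖ ∂μ with hg
    have hpos : ∀ (a : Fin k → ℝ) (x : X),
        0 < ‖(𝒜 a x : (Fin d → ℝ) →L[ℝ] (Fin d → ℝ))‖ := by
      intro a x
      rw [norm_pos_iff]
      intro hzero
      obtain ⟨v, hv⟩ := exists_ne (0 : Fin d → ℝ)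
      have h2 : 𝒜 a x v = 0 := by
        have := congrArg (fun f : (Fin d → ℝ) →L[ℝ] (Fin d → ℝ) => f v) hzero
        simpa using this
      exact hv ((𝒜 a x).injective (by simpa using h2))
    have honebd : ∀ (a : Fin k → ℝ) (x : X),
        1 ≤ ‖((𝒜 a x).symm : (Fin d → ℝ) →L[ℝ] (Fin d → ℝ))‖ *
          ‖(𝒜 a x : (Fin d → ℝ) →L[ℝ] (Fin d → ℝ))‖ := by
      intro a x
      have hid : (((𝒜 a x).symm : (Fin d → ℝ) →L[ℝ] (Fin d → ℝ)).comp
          (𝒜 a x : (Fin d → ℝ) →L[ℝ] (Fin d → ℝ))) =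
          ContinuousLinearMap.id ℝ (Fin d → ℝ) := by
        ext v; simp
      calc (1 : ℝ) = ‖ContinuousLinearMap.id ℝ (Fin d → ℝ)‖ :=
            (ContinuousLinearMap.norm_id).symm
        _ = ‖(((𝒜 a x).symm : (Fin d → ℝ) →L[ℝ] (Fin d → ℝ)).comp
            (𝒜 a x : (Fin d → ℝ) →L[ℝ] (Fin d → ℝ)))‖ := by rw [hid]
        _ ≤ _ := ContinuousLinearMap.opNorm_comp_le _ _
    have hlogbdd : ∀ R : ℝ, ∃ C : ℝ, 0 ≤ C ∧ ∀ a : Fin k → ℝ, ‖a‖ ≤ R → ∀ x : X,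
        |Real.log ‖(𝒜 a x : (Fin d → ℝ) →L[ℝ] (Fin d → ℝ))‖| ≤ C := by
      intro R
      obtain ⟨C, hC⟩ := hbdd R
      refine ⟨Real.log (max C 1), Real.log_nonneg (le_max_right _ _), ?_⟩
      intro a ha x
      have h1 := (hC a ha x).1
      have h2 := (hC a ha x).2
      have hmaxpos : (0 : ℝ) < max C 1 := lt_of_lt_of_le one_pos (le_max_right _ _)
      rw [abs_le]
      constructor
      · rw [← Real.log_inv]
        apply Real.log_le_log (by positivity)
        have h4 : 1 ≤ ‖(𝒜 a x : (Fin d → ℝ) →L[ℝ] (Fin d → ℝ))‖ * max C 1 := by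
          calc (1 : ℝ) ≤ ‖((𝒜 a x).symm : (Fin d → ℝ) →L[ℝ] (Fin d → ℝ))‖ *
              ‖(𝒜 a x : (Fin d → ℝ) →L[ℝ] (Fin d → ℝ))‖ := honebd a x
            _ ≤ max C 1 * ‖(𝒜 a x : (Fin d → ℝ) →L[ℝ] (Fin d → ℝ))‖ :=
              mul_le_mul_of_nonneg_right (h2.trans (le_max_left _ _)) (norm_nonneg _)
            _ = _ := mul_comm _ _
        calc (max C 1)⁻¹ = 1 / max C 1 := (one_div _).symm
          _ ≤ ‖(𝒜 a x : (Fin d → ℝ) →L[ℝ] (Fin d → ℝ))‖ := by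
            rw [div_le_iff₀ hmaxpos]; exact h4
      · exact Real.log_le_log (hpos a x) (h1.trans (le_max_left _ _))
    have hmeas : ∀ a : Fin k → ℝ,
        Measurable fun x => (𝒜 a x : (Fin d → ℝ) →L[ℝ] (Fin d → ℝ)) :=
      fun a => h𝒜m.comp measurable_prodMk_left
    have hmeaslog : ∀ a : Fin k → ℝ,
        Measurable fun x => Real.log ‖(𝒜 a x : (Fin d → ℝ) →L[ℝ] (Fin d → ℝ))‖ :=
      fun a => Real.measurable_log.comp (hmeas a).norm
    have hint : ∀ a : Fin k → ℝ,
        Integrable (fun x => Real.log ‖(𝒜 a x : (Fin d → ℝ) →L[ℝ] (Fin d → ℝ))‖) μ := by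
      intro a
      obtain ⟨C, hC0, hC⟩ := hlogbdd ‖a‖
      refine ⟨(hmeaslog a).aestronglyMeasurable, HasFiniteIntegral.of_bounded (C := C) ?_⟩
      exact ae_of_all _ fun x => by simpa [Real.norm_eq_abs] using hC a le_rfl x
    have hTb : ∀ b : Fin k → ℝ, Measurable (T b) :=
      fun b => hTjm.comp measurable_prodMk_left
    have hintT : ∀ a b : Fin k → ℝ,
        Integrable (fun x => Real.log ‖(𝒜 a (T b x) : (Fin d → ℝ) →L[ℝ] (Fin d → ℝ))‖) μ :=
      fun a b => ((hTpres b).integrable_comp (hmeaslog a).aestronglyMeasurable).2 (hint a)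
    have hcompint : ∀ a b : Fin k → ℝ,
        ∫ x, Real.log ‖(𝒜 a (T b x) : (Fin d → ℝ) →L[ℝ] (Fin d → ℝ))‖ ∂μ = g a := by
      intro a b
      calc ∫ x, Real.log ‖(𝒜 a (T b x) : (Fin d → ℝ) →L[ℝ] (Fin d → ℝ))‖ ∂μ
          = ∫ y, Real.log ‖(𝒜 a y : (Fin d → ℝ) →L[ℝ] (Fin d → ℝ))‖ ∂(Measure.map (T b) μ) :=
            (integral_map (hTb b).aemeasurable
              (by rw [(hTpres b).map_eq]; exact (hmeaslog a).aestronglyMeasurable)).symm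
        _ = g a := by rw [(hTpres b).map_eq]
    have g0 : g 0 = 0 := by
      have hid : ∀ x : X, (𝒜 0 x : (Fin d → ℝ) →L[ℝ] (Fin d → ℝ)) =
          ContinuousLinearMap.id ℝ (Fin d → ℝ) := by
        intro x
        refine ContinuousLinearMap.ext fun v => ?_
        have h := hcoc 0 0 x
        rw [add_zero] at h
        have h2 := congrArg (fun f : (Fin d → ℝ) →L[ℝ] (Fin d → ℝ) => f v) h
        rw [hT0] at h2
        simp only [id_eq, ContinuousLinearMap.coe_comp', Function.comp_apply,
          ContinuousLinearEquiv.coe_coe] at h2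
        have h3 := (𝒜 0 x).injective h2.symm
        simpa using h3
      have heq : (fun x => Real.log ‖(𝒜 0 x : (Fin d → ℝ) →L[ℝ] (Fin d → ℝ))‖) =
          fun _ : X => (0 : ℝ) := by
        funext x
        rw [hid x, ContinuousLinearMap.norm_id, Real.log_one]
      rw [hg]
      show (∫ x, Real.log ‖(𝒜 0 x : (Fin d → ℝ) →L[ℝ] (Fin d → ℝ))‖ ∂μ) = 0
      rw [heq, integral_zero]
    have gadd : ∀ a b : Fin k → ℝ, g (a + b) ≤ g a + g b := by
      intro a b
      have key : ∀ x : X, Real.log ‖(𝒜 (a + b) x : (Fin d → ℝ) →L[ℝ] (Fin d → ℝ))‖ ≤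
          Real.log ‖(𝒜 a (T b x) : (Fin d → ℝ) →L[ℝ] (Fin d → ℝ))‖ +
            Real.log ‖(𝒜 b x : (Fin d → ℝ) →L[ℝ] (Fin d → ℝ))‖ := by
        intro x
        rw [← Real.log_mul (hpos a (T b x)).ne' (hpos b x).ne']
        apply Real.log_le_log (hpos (a + b) x)
        rw [hcoc a b x]
        exact ContinuousLinearMap.opNorm_comp_le _ _
      calc g (a + b)
          ≤ ∫ x, (Real.log ‖(𝒜 a (T b x) : (Fin d → ℝ) →L[ℝ] (Fin d → ℝ))‖ +
              Real.log ‖(𝒜 b x : (Fin d → ℝ) →L[ℝ] (Fin d → ℝ))‖) ∂μ :=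
            integral_mono (hint (a + b)) ((hintT a b).add (hint b)) key
        _ = (∫ x, Real.log ‖(𝒜 a (T b x) : (Fin d → ℝ) →L[ℝ] (Fin d → ℝ))‖ ∂μ) +
            ∫ x, Real.log ‖(𝒜 b x : (Fin d → ℝ) →L[ℝ] (Fin d → ℝ))‖ ∂μ :=
            integral_add (hintT a b) (hint b)
        _ = g a + g b := by rw [hcompint a b]
    have hbd' : ∀ s : Fin k → ℝ, ∃ M : ℝ, ∀ r : ℝ, |r| ≤ 1 → |g (r • s)| ≤ M := by
      intro s
      obtain ⟨C, hC0, hC⟩ := hlogbdd ‖s‖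
      refine ⟨C, fun r hr => ?_⟩
      have hnorm : ‖r • s‖ ≤ ‖s‖ := by
        rw [norm_smul]
        calc ‖r‖ * ‖s‖ ≤ 1 * ‖s‖ := by
              apply mul_le_mul_of_nonneg_right _ (norm_nonneg s)
              rwa [Real.norm_eq_abs]
          _ = ‖s‖ := one_mul _
      calc |g (r • s)|
          ≤ ∫ x, |Real.log ‖(𝒜 (r • s) x : (Fin d → ℝ) →L[ℝ] (Fin d → ℝ))‖| ∂μ := by
            rw [hg]
            simpa [Real.norm_eq_abs] using
              norm_integral_le_integral_norm
                (fun x => Real.log ‖(𝒜 (r • s) x : (Fin d → ℝ) →L[ℝ] (Fin d → ℝ))‖) (μ := μ)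
        _ ≤ ∫ _, C ∂μ :=
            integral_mono (hint (r • s)).abs (integrable_const C)
              fun x => hC (r • s) hnorm x
        _ = C := by simp
    have hP : ∀ s : Fin k → ℝ, auxP g s =
        ⨅ n : ℕ, (1 / (n + 1 : ℝ)) *
          ∫ x, Real.log
            ‖(𝒜 (((n : ℝ) + 1) • s) x : (Fin d → ℝ) →L[ℝ] (Fin d → ℝ))‖ ∂μ := by
      intro s
      rw [auxP]
    have main : ∀ v : Fin k → ℝ, v ≠ 0 → ∃ lam : (Fin k → ℝ) →ₗ[ℝ] ℝ,
        lam v = auxP g v ∧ ∀ s : Fin k → ℝ, lam s ≤ auxP g s := by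
      intro v hv
      have hf : ∀ x : (LinearPMap.mkSpanSingleton (K := ℝ) (σ := RingHom.id ℝ) v (auxP g v) hv).domain,
          (LinearPMap.mkSpanSingleton (K := ℝ) (σ := RingHom.id ℝ) v (auxP g v) hv) x ≤ auxP g x := by
        rintro ⟨x, hx⟩
        obtain ⟨t, rfl⟩ := Submodule.mem_span_singleton.1 hx
        rw [LinearPMap.mkSpanSingleton'_apply]
        show t • auxP g v ≤ auxP g (t • v)
        rcases lt_trichotomy t 0 with h | h | h
        · have e : t • v = (-t) • (-v) := by rw [smul_neg, neg_smul, neg_neg]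
          have h1 : auxP g (t • v) = (-t) * auxP g (-v) := by
            rw [e]; exact auxP_smul gadd g0 hbd' (-v) (neg_pos.2 h)
          have h2 : 0 ≤ auxP g v + auxP g (-v) := by
            have h3 := auxP_add gadd g0 v (-v)
            rw [add_neg_cancel, auxP_zero gadd g0] at h3
            linarith
          rw [smul_eq_mul, h1]
          nlinarith
        · rw [h, zero_smul, zero_smul, auxP_zero gadd g0]

        · rw [smul_eq_mul, auxP_smul gadd g0 hbd' v h]
      obtain ⟨lam, hlam1, hlam2⟩ := exists_extension_of_le_sublinear
        (LinearPMap.mkSpanSingleton (K := ℝ) (σ := RingHom.id ℝ) v (auxP g v) hv) (auxP g)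
        (fun c hc x => auxP_smul gadd g0 hbd' x hc) (auxP_add gadd g0) hf
      refine ⟨lam, ?_, hlam2⟩
      have h5 := hlam1 ⟨v, Submodule.mem_span_singleton_self v⟩
      rw [LinearPMap.mkSpanSingleton_apply] at h5
      exact h5
    by_cases hs' : s' = 0
    · subst hs'
      by_cases hE : ∃ v : Fin k → ℝ, v ≠ 0
      · obtain ⟨v, hv⟩ := hE
        obtain ⟨lam, _, hlam2⟩ := main v hv
        refine ⟨lam, ?_, fun s => (hP s) ▸ hlam2 s⟩
        intro t _
        rw [← hP (t • (0 : Fin k → ℝ)), smul_zero, auxP_zero gadd g0, map_zero]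
      · refine ⟨0, ?_, ?_⟩
        · intro t _
          rw [← hP (t • (0 : Fin k → ℝ)), smul_zero, auxP_zero gadd g0]
          rfl
        · intro s
          have hs : s = 0 := by
            by_contra h
            exact hE ⟨s, h⟩
          rw [hs, ← hP (0 : Fin k → ℝ), auxP_zero gadd g0]
          rfl
    · obtain ⟨lam, hlam1, hlam2⟩ := main s' hs'
      refine ⟨lam, ?_, fun s => (hP s) ▸ hlam2 s⟩
      intro t ht
      rw [← hP (t • s')]
      rcases eq_or_lt_of_le ht with rfl | ht'
      · rw [zero_smul, auxP_zero gadd g0, map_zero]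
      · rw [LinearMap.map_smul, smul_eq_mul, hlam1, auxP_smul gadd g0 hbd' s' ht']
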